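/- For g ≥ 2, let G_H(g) be the presented group with generators t_1,…,t_{2g+1}, ρ and defining relations: t_k t_j = t_j t_k for |k−j| > 1; t_j t_{j+1} t_j = t_{j+1} t_j t_{j+1} for j = 1,…,2g; (t_1 t_2 ⋯ t_{2g+1})^{2g+2} = 1; ρ = t_1 t_2 ⋯ t_{2g+1} t_{2g+1} ⋯ t_2 t_1; ρ² = 1; and ρ t_1 ρ = t_1. Then the abelianization of G_H(g) is cyclic, generated by the image of t_1, and is isomorphic to Z/(4g+2) if g is even and to Z/(8g+4) if g is odd. -/

import Mathlib

open FreeGroup in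
/-- The Birman–Hilden relations for `M^h(S_g)`. The generator `some i` is `t_{i+1}`
(`i : Fin (2g+1)`), `none` is `ρ`. -/
def relsH (g : ℕ) : Set (FreeGroup (Option (Fin (2*g+1)))) :=
  -- t_k t_j = t_j t_k for |k-j| > 1
  {r | ∃ j k : Fin (2*g+1), ((j : ℕ) + 1 < k ∨ (k : ℕ) + 1 < j) ∧
        r = of (some k) * of (some j) * (of (some j) * of (some k))⁻¹} ∪
  -- braid relations
  {r | ∃ j k : Fin (2*g+1), (j : ℕ) + 1 = k ∧
        r = of (some j) * of (some k) * of (some j) *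
            (of (some k) * of (some j) * of (some k))⁻¹} ∪
  -- (t_1 ⋯ t_{2g+1})^{2g+2} = 1
  {(List.ofFn (fun i : Fin (2*g+1) => of (some i : Option (Fin (2*g+1))))).prod ^ (2*g+2)} ∪
  -- ρ = t_1 ⋯ t_{2g+1} t_{2g+1} ⋯ t_1
  {(List.ofFn (fun i : Fin (2*g+1) => of (some i : Option (Fin (2*g+1))))).prod *
      ((List.ofFn (fun i : Fin (2*g+1) => of (some i : Option (Fin (2*g+1))))).reverse).prod *
      (of (none : Option (Fin (2*g+1))))⁻¹} ∪
  -- ρ² = 1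
  {of (none : Option (Fin (2*g+1))) ^ 2} ∪
  -- ρ t_1 ρ = t_1
  {of (none : Option (Fin (2*g+1))) * of (some 0) * of none * (of (some 0))⁻¹}

/-- `G_H(g)`, the Birman–Hilden presentation of the hyperelliptic mapping class group
`M^h(S_g)`. -/
def GH (g : ℕ) : Type := PresentedGroup (relsH g)

instance (g : ℕ) : Group (GH g) := by unfold GH; infer_instance

/-- The generator `t_{i+1}` of `G_H(g)`. -/
def GH.t {g : ℕ} (i : Fin (2*g+1)) : GH g := PresentedGroup.of (rels := relsH g) (some i)

section Aux

open FreeGroup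

namespace GHaux

variable {g : ℕ}

/-- Projection from the free group to the abelianization of `GH g`. -/
def π (g : ℕ) : FreeGroup (Option (Fin (2*g+1))) →* Abelianization (GH g) :=
  (Abelianization.of (G := GH g)).comp (PresentedGroup.mk (relsH g))

lemma π_surjective : Function.Surjective (π g) := by
  intro x
  refine Quotient.inductionOn' x fun y => ?_
  refine Quotient.inductionOn' y fun w => ?_
  exact ⟨w, rfl⟩

lemma π_rel {r : FreeGroup (Option (Fin (2*g+1)))} (hr : r ∈ relsH g) : π g r = 1 := by
  have h1 : PresentedGroup.mk (relsH g) r = 1 :=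
    (QuotientGroup.eq_one_iff _).2 (Subgroup.subset_normalClosure hr)
  show Abelianization.of (PresentedGroup.mk (relsH g) r) = 1
  rw [h1, _root_.map_one]

/-- The common image of the generators `t_i` in the abelianization. -/
def a (g : ℕ) : Abelianization (GH g) := Abelianization.of (GH.t (0 : Fin (2*g+1)))

lemma π_of (i : Fin (2*g+1)) : π g (of (some i)) = Abelianization.of (GH.t i) := rfl

lemma step (j k : Fin (2*g+1)) (h : (j : ℕ) + 1 = k) :
    π g (of (some k)) = π g (of (some j)) := by
  have hmem : of (some j) * of (some k) * of (some j) *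
      (of (some k) * of (some j) * of (some k))⁻¹ ∈ relsH g :=
    Or.inl (Or.inl (Or.inl (Or.inl (Or.inr ⟨j, k, h, rfl⟩))))
  have h1 := π_rel hmem
  simp only [_root_.map_mul, _root_.map_inv, mul_inv_eq_one] at h1
  set x := π g (of (some j)) with hx
  set y := π g (of (some k)) with hy
  rw [mul_comm y x] at h1
  exact (mul_left_cancel h1).symm

lemma all_eq (i : Fin (2*g+1)) : π g (of (some i)) = a g := by
  obtain ⟨k, hk⟩ := i
  induction k with
  | zero =>
      have h0 : (⟨0, hk⟩ : Fin (2*g+1)) = 0 := by ext; simp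
      rw [h0]; rfl
  | succ k ih =>
      have hk' : k < 2*g+1 := by omega
      rw [step ⟨k, hk'⟩ ⟨k+1, hk⟩ rfl]
      exact ih hk'

lemma map_P {M : Type*} [Monoid M] (F : FreeGroup (Option (Fin (2*g+1))) →* M) (c : M)
    (h : ∀ i : Fin (2*g+1), F (of (some i)) = c) :
    F (List.ofFn (fun i : Fin (2*g+1) => of (some i : Option (Fin (2*g+1))))).prod
      = c ^ (2*g+1) := by
  rw [_root_.map_list_prod, List.map_ofFn]
  have : (⇑F ∘ fun i : Fin (2*g+1) => of (some i)) = fun _ : Fin (2*g+1) => c :=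
    funext fun i => h i
  rw [this, List.ofFn_const, List.prod_replicate]

lemma map_Prev {M : Type*} [CommMonoid M] (F : FreeGroup (Option (Fin (2*g+1))) →* M) (c : M)
    (h : ∀ i : Fin (2*g+1), F (of (some i)) = c) :
    F ((List.ofFn (fun i : Fin (2*g+1) => of (some i : Option (Fin (2*g+1))))).reverse).prod
      = c ^ (2*g+1) := by
  rw [_root_.map_list_prod, List.map_reverse, List.prod_reverse, ← _root_.map_list_prod]
  exact map_P F c h

lemma rel3 : a g ^ ((2*g+1)*(2*g+2)) = 1 := by
  have hmem : (List.ofFn (fun i : Fin (2*g+1) =>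
      of (some i : Option (Fin (2*g+1))))).prod ^ (2*g+2) ∈ relsH g :=
    Or.inl (Or.inl (Or.inl (Or.inr rfl)))
  have h1 := π_rel hmem
  rw [_root_.map_pow, map_P (π g) (a g) all_eq, ← pow_mul] at h1
  exact h1

lemma ρ_eq : π g (of (none : Option (Fin (2*g+1)))) = a g ^ (2*(2*g+1)) := by
  have hmem : (List.ofFn (fun i : Fin (2*g+1) => of (some i : Option (Fin (2*g+1))))).prod *
      ((List.ofFn (fun i : Fin (2*g+1) => of (some i : Option (Fin (2*g+1))))).reverse).prod *
      (of (none : Option (Fin (2*g+1))))⁻¹ ∈ relsH g :=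
    Or.inl (Or.inl (Or.inr rfl))
  have h1 := π_rel hmem
  rw [_root_.map_mul, _root_.map_mul, _root_.map_inv, map_P (π g) (a g) all_eq, map_Prev (π g) (a g) all_eq,
    mul_inv_eq_one] at h1
  rw [← h1, ← pow_add]
  congr 1
  ring

lemma rel5 : a g ^ (4*(2*g+1)) = 1 := by
  have hmem : of (none : Option (Fin (2*g+1))) ^ 2 ∈ relsH g :=
    Or.inl (Or.inr rfl)
  have h1 := π_rel hmem
  rw [_root_.map_pow, ρ_eq, ← pow_mul] at h1
  rw [show 4*(2*g+1) = 2*(2*g+1)*2 by ring]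
  exact h1

lemma closure_a : Subgroup.closure {a g} = ⊤ := by
  rw [eq_top_iff]
  calc (⊤ : Subgroup (Abelianization (GH g)))
      = (π g).range := (MonoidHom.range_eq_top.2 π_surjective).symm
    _ = Subgroup.map (π g) ⊤ := MonoidHom.range_eq_map _
    _ = Subgroup.map (π g) (Subgroup.closure (Set.range of)) := by
          rw [FreeGroup.closure_range_of]
    _ = Subgroup.closure (π g '' Set.range of) := MonoidHom.map_closure _ _
    _ ≤ Subgroup.closure {a g} := by
          rw [Subgroup.closure_le]
          rintro _ ⟨_, ⟨x, rfl⟩, rfl⟩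
          have ha : a g ∈ Subgroup.closure {a g} :=
            Subgroup.subset_closure rfl
          cases x with
          | none => rw [ρ_eq]; exact pow_mem ha _
          | some i => rw [all_eq i]; exact ha

lemma pow_even (hge : Even g) : a g ^ (4*g+2) = 1 := by
  obtain ⟨c, hc⟩ := hge
  have H1 : a g ^ ((2*g+1)*(2*g+2)) = 1 := rel3
  have H2 : a g ^ (4*(2*g+1)) = 1 := rel5
  have hx : (2*g+1)*(2*g+2) = (4*g+2) + (4*(2*g+1))*c := by subst hc; ring
  rw [hx, pow_add, pow_mul, H2, one_pow, mul_one] at H1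
  exact H1

lemma iso (n : ℕ) (h1 : n ∣ (2*g+1)*(2*g+2)) (h2 : n ∣ 8*g+4)
    (han : a g ^ n = 1) :
    Nonempty (Abelianization (GH g) ≃* Multiplicative (ZMod n)) := by
  classical
  set f : Option (Fin (2*g+1)) → Multiplicative (ZMod n) :=
    fun x => x.elim (Multiplicative.ofAdd ((4*g+2 : ℕ) : ZMod n))
      (fun _ => Multiplicative.ofAdd (1 : ZMod n)) with hf
  have key : ∀ k : ℕ,
      (Multiplicative.ofAdd (1 : ZMod n)) ^ k = Multiplicative.ofAdd ((k : ZMod n)) := by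
    intro k
    rw [← ofAdd_nsmul, nsmul_eq_mul, mul_one]
  have hcast0 : ∀ k : ℕ, n ∣ k → (Multiplicative.ofAdd ((k : ZMod n))) = 1 := by
    intro k hk
    rw [ofAdd_eq_one, ZMod.natCast_eq_zero_iff]
    exact hk
  have hc8 : ((4*g+2 : ℕ) : ZMod n) + ((4*g+2 : ℕ) : ZMod n) = 0 := by
    rw [← Nat.cast_add, show (4*g+2) + (4*g+2) = 8*g+4 by ring,
      ZMod.natCast_eq_zero_iff]
    exact h2
  have hrel : ∀ r ∈ relsH g, FreeGroup.lift f r = 1 := by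
    rintro r (((((⟨j, k, hjk, rfl⟩ | ⟨j, k, hjk, rfl⟩) | rfl) | rfl) | rfl) | rfl)
    · simp only [_root_.map_mul, _root_.map_inv, FreeGroup.lift_apply_of, hf, Option.elim]
      group
    · simp only [_root_.map_mul, _root_.map_inv, FreeGroup.lift_apply_of, hf, Option.elim]
      group
    · rw [_root_.map_pow, map_P (FreeGroup.lift f) (Multiplicative.ofAdd (1 : ZMod n))
        (fun i => by rw [FreeGroup.lift_apply_of]; rfl), ← pow_mul, key]
      exact hcast0 _ h1
    · rw [_root_.map_mul, _root_.map_mul, _root_.map_inv,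
        map_P (FreeGroup.lift f) (Multiplicative.ofAdd (1 : ZMod n))
          (fun i => by rw [FreeGroup.lift_apply_of]; rfl),
        map_Prev (FreeGroup.lift f) (Multiplicative.ofAdd (1 : ZMod n))
          (fun i => by rw [FreeGroup.lift_apply_of]; rfl),
        FreeGroup.lift_apply_of, key]
      show Multiplicative.ofAdd ((2*g+1 : ℕ) : ZMod n) *
        Multiplicative.ofAdd ((2*g+1 : ℕ) : ZMod n) *
        (Multiplicative.ofAdd ((4*g+2 : ℕ) : ZMod n))⁻¹ = 1
      rw [← ofAdd_add, ← ofAdd_neg, ← ofAdd_add, ofAdd_eq_one]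
      push_cast
      ring
    · rw [_root_.map_pow, FreeGroup.lift_apply_of]
      show (Multiplicative.ofAdd ((4*g+2 : ℕ) : ZMod n)) ^ 2 = 1
      rw [pow_two, ← ofAdd_add, ofAdd_eq_one]
      exact hc8
    · simp only [_root_.map_mul, _root_.map_inv, FreeGroup.lift_apply_of]
      show Multiplicative.ofAdd ((4*g+2 : ℕ) : ZMod n) * Multiplicative.ofAdd (1 : ZMod n) *
        Multiplicative.ofAdd ((4*g+2 : ℕ) : ZMod n) *
        (Multiplicative.ofAdd (1 : ZMod n))⁻¹ = 1
      rw [← ofAdd_add, ← ofAdd_add, ← ofAdd_neg, ← ofAdd_add, ofAdd_eq_one]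
      rw [show ((4*g+2 : ℕ) : ZMod n) + 1 + ((4*g+2 : ℕ) : ZMod n) + -1
        = ((4*g+2 : ℕ) : ZMod n) + ((4*g+2 : ℕ) : ZMod n) by ring]
      exact hc8
  let φ0 : GH g →* Multiplicative (ZMod n) := PresentedGroup.toGroup hrel
  let φ : Abelianization (GH g) →* Multiplicative (ZMod n) := Abelianization.lift φ0
  have hφa : φ (a g) = Multiplicative.ofAdd (1 : ZMod n) := by
    show φ0 (GH.t 0) = _
    exact PresentedGroup.toGroup.of hrel
  let Fz : ℤ →+ Additive (Abelianization (GH g)) :=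
    zmultiplesHom (Additive (Abelianization (GH g))) (Additive.ofMul (a g))
  have hFz : Fz (n : ℤ) = 0 := by
    show (n : ℤ) • Additive.ofMul (a g) = 0
    rw [← ofMul_zpow, zpow_natCast, han]
    rfl
  let ψ0 : ZMod n →+ Additive (Abelianization (GH g)) := ZMod.lift n ⟨Fz, hFz⟩
  let ψ : Multiplicative (ZMod n) →* Abelianization (GH g) :=
    AddMonoidHom.toMultiplicativeLeft ψ0
  have hψ : ∀ x : ℤ, ψ (Multiplicative.ofAdd ((x : ZMod n))) = a g ^ x := by
    intro x
    show Additive.toMul (ψ0 ((x : ZMod n))) = a g ^ x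
    rw [show ψ0 ((x : ZMod n)) = Fz x from ZMod.lift_coe n ⟨Fz, hFz⟩ x]
    show Additive.toMul ((x : ℤ) • Additive.ofMul (a g)) = a g ^ x
    rw [← ofMul_zpow]
    rfl
  refine ⟨MonoidHom.toMulEquiv φ ψ ?_ ?_⟩
  · apply MonoidHom.eq_of_eqOn_dense (closure_a (g := g))
    intro x hx
    rw [Set.mem_singleton_iff] at hx
    subst hx
    show ψ (φ (a g)) = a g
    rw [hφa]
    have := hψ 1
    rw [Int.cast_one, zpow_one] at this
    exact this
  · ext x
    show φ (ψ x) = x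
    have hx : x = Multiplicative.ofAdd (((ZMod.cast (Multiplicative.toAdd x) : ℤ) : ZMod n)) := by
      rw [ZMod.intCast_zmod_cast]; rfl
    rw [hx, hψ, _root_.map_zpow, hφa, ← ofAdd_zsmul, zsmul_eq_mul, mul_one]

end GHaux

end Aux

/-- `H_1(M^h(S_g))` is cyclic, generated by the image of `t_1`, and is `ℤ/(4g+2)` for `g`
even and `ℤ/(8g+4)` for `g` odd. -/
theorem stmt14 (g : ℕ) (hg : 2 ≤ g) :
    Subgroup.closure {Abelianization.of (GH.t (0 : Fin (2*g+1)))} = ⊤ ∧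
    (Even g → Nonempty (Abelianization (GH g) ≃* Multiplicative (ZMod (4*g+2)))) ∧
    (Odd g → Nonempty (Abelianization (GH g) ≃* Multiplicative (ZMod (8*g+4)))) := by
  refine ⟨GHaux.closure_a, ?_, ?_⟩
  · intro he
    exact GHaux.iso (4*g+2) ⟨g+1, by ring⟩ ⟨2, by ring⟩ (GHaux.pow_even he)
  · intro ho
    obtain ⟨c, hc⟩ := ho
    refine GHaux.iso (8*g+4) ⟨c+1, by subst hc; ring⟩ dvd_rfl ?_
    rw [show 8*g+4 = 4*(2*g+1) by ring]
    exact GHaux.rel5
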